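/- arXiv:1409.3130 — 2 statements merged into one kernel-verified Lean document; each statement's English description precedes it below -/
import Mathlib

section
/- Let x₁, …, x_N be distinct complex numbers and D₁, …, D_N nonzero complex numbers, with c_k = Σᵢ Dᵢ xᵢ^k. Suppose b₀, …, b_M ∈ ℂ with M < N and b_M ≠ 0 satisfy Σ_{l=0}^{M} b_l c_{j+l} = 0 for all j = 0, …, N−1. Then this leads to a contradiction; i.e., no nonzero polynomial of degree less than N annihilates the moment sequence in this Hankel sense. -/
theorem prony_minimality (N : ℕ) (x D : Fin N → ℂ) (hx : Function.Injective x)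
    (hD : ∀ i, D i ≠ 0) (c : ℕ → ℂ) (hc : ∀ k, c k = ∑ i, D i * x i ^ k)
    (M : ℕ) (hM : M < N) (b : ℕ → ℂ) (hbM : b M ≠ 0)
    (hker : ∀ j < N, ∑ l ∈ Finset.range (M + 1), b l * c (j + l) = 0) :
    False := by
  set p : Polynomial ℂ := ∑ l ∈ Finset.range (M + 1), Polynomial.C (b l) * Polynomial.X ^ l
    with hp
  have hcoeff : p.coeff M = b M := by
    simp [hp, Polynomial.finset_sum_coeff, Polynomial.coeff_C_mul, Polynomial.coeff_X_pow,
      Finset.sum_ite_eq']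
  have hpne : p ≠ 0 := fun h => hbM (by simp [h] at hcoeff; exact hcoeff.symm)
  have hdeg : p.natDegree ≤ M := by
    apply Polynomial.natDegree_sum_le_of_forall_le
    intro l hl
    calc (Polynomial.C (b l) * Polynomial.X ^ l).natDegree ≤ l := by
          simpa using (Polynomial.natDegree_C_mul_le (b l) (Polynomial.X ^ l)).trans
            (le_of_eq (Polynomial.natDegree_X_pow l))
      _ ≤ M := Nat.lt_succ_iff.mp (Finset.mem_range.mp hl)
  -- the vector y i = D i * p(x i) is killed by the Vandermonde matrix
  set y : Fin N → ℂ := fun i => D i * p.eval (x i) with hy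
  have hvec : Matrix.vecMul y (Matrix.vandermonde x) = 0 := by
    funext j
    have := hker j j.isLt
    simp only [Matrix.vecMul, dotProduct, Matrix.vandermonde, Pi.zero_apply]
    rw [← this]
    simp only [hy, hc, hp, Polynomial.eval_finset_sum, Polynomial.eval_mul, Polynomial.eval_C,
      Polynomial.eval_pow, Polynomial.eval_X]
    simp only [Finset.mul_sum, Finset.sum_mul, Matrix.of_apply]
    rw [Finset.sum_comm]
    apply Finset.sum_congr rfl
    intro l _
    apply Finset.sum_congr rfl
    intro i _
    rw [pow_add]
    ring
  have hyzero : y = 0 := by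
    have hdet : (Matrix.vandermonde x).det ≠ 0 := by
      rw [Matrix.det_vandermonde_ne_zero_iff]; exact hx
    exact Matrix.eq_zero_of_vecMul_eq_zero hdet hvec
  have hroot : ∀ i, p.eval (x i) = 0 := by
    intro i
    have : y i = 0 := by rw [hyzero]; rfl
    rcases mul_eq_zero.mp this with h | h
    · exact absurd h (hD i)
    · exact h
  -- p has N distinct roots but degree ≤ M < N
  have hsub : Finset.univ.image x ⊆ p.roots.toFinset := by
    intro z hz
    rcases Finset.mem_image.mp hz with ⟨i, _, rfl⟩
    simp [Multiset.mem_toFinset, Polynomial.mem_roots hpne, hroot i]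
  have hcard : N ≤ p.roots.toFinset.card := by
    calc N = (Finset.univ.image x).card := by
          rw [Finset.card_image_of_injective _ hx, Finset.card_univ, Fintype.card_fin]
      _ ≤ _ := Finset.card_le_card hsub
  have : p.roots.toFinset.card ≤ M := by
    calc p.roots.toFinset.card ≤ Multiset.card p.roots := p.roots.toFinset_card_le
      _ ≤ p.natDegree := p.card_roots'
      _ ≤ M := hdeg
  omega
end

section
/- Let x₁,…,x_N be distinct real numbers with N ≥ 1 and D₁,…,D_N nonzero reals, c_k = Σᵢ Dᵢ xᵢ^k. If a monic polynomial p(t) = a₀ + a₁ t + … + a_{M−1}t^{M−1} + t^M with M ≤ N satisfies Σ_{l=0}^{M} a_l c_{j+l} = 0 (with a_M = 1) for all 0 ≤ j ≤ 2N−1−M, then M = N and p(t) = ∏ᵢ₌₁^N (t − xᵢ); in particular the roots of p are exactly x₁,…,x_N. -/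
open Polynomial

theorem prony_correctness (N : ℕ) (hN : 1 ≤ N) (x D : Fin N → ℝ)
    (hx : Function.Injective x) (hD : ∀ i, D i ≠ 0)
    (c : ℕ → ℝ) (hc : ∀ k, c k = ∑ i, D i * x i ^ k)
    (M : ℕ) (hM : M ≤ N) (a : ℕ → ℝ) (hmonic : a M = 1)
    (hker : ∀ j ≤ 2 * N - 1 - M, ∑ l ∈ Finset.range (M + 1), a l * c (j + l) = 0) :
    M = N ∧
      (∑ l ∈ Finset.range (M + 1), Polynomial.C (a l) * Polynomial.X ^ l) =
        ∏ i, (Polynomial.X - Polynomial.C (x i)) := by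
  set p : Polynomial ℝ := ∑ l ∈ Finset.range (M + 1), Polynomial.C (a l) * Polynomial.X ^ l
    with hpdef
  have hcoeffM : p.coeff M = 1 := by
    simp [p, Polynomial.finset_sum_coeff, Polynomial.coeff_C_mul, Polynomial.coeff_X_pow,
      Finset.sum_ite_eq, hmonic]
  have hdegle : p.natDegree ≤ M := by
    apply Polynomial.natDegree_sum_le_of_forall_le
    intro l hl
    refine (Polynomial.natDegree_C_mul_le _ _).trans ?_
    simp only [Polynomial.natDegree_X_pow]
    exact Nat.lt_succ_iff.mp (Finset.mem_range.mp hl)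
  have hpmonic : p.Monic := Polynomial.monic_of_natDegree_le_of_coeff_eq_one M hdegle hcoeffM
  have hpne : p ≠ 0 := hpmonic.ne_zero
  have hdeg : p.natDegree = M := le_antisymm hdegle (Polynomial.le_natDegree_of_ne_zero
    (by rw [hcoeffM]; norm_num))
  have heval : ∀ i, p.eval (x i) = ∑ l ∈ Finset.range (M + 1), a l * x i ^ l := by
    intro i; simp [p, Polynomial.eval_finset_sum]
  -- Vandermonde step: D i * p.eval (x i) = 0 for all i
  have hv : (fun i => D i * p.eval (x i)) = 0 := by
    apply Matrix.eq_zero_of_forall_pow_sum_mul_pow_eq_zero hx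
    intro j
    have hj : (j : ℕ) ≤ 2 * N - 1 - M := by have := j.isLt; omega
    have h0 := hker j hj
    rw [Finset.sum_congr rfl (fun l _ => by rw [hc ((j : ℕ) + l)])] at h0
    calc ∑ i, D i * p.eval (x i) * x i ^ (j : ℕ)
        = ∑ i, ∑ l ∈ Finset.range (M + 1), a l * (D i * x i ^ ((j : ℕ) + l)) := by
          refine Finset.sum_congr rfl fun i _ => ?_
          rw [heval, Finset.mul_sum, Finset.sum_mul]
          refine Finset.sum_congr rfl fun l _ => ?_
          rw [pow_add]
          ring
      _ = ∑ l ∈ Finset.range (M + 1), a l * ∑ i, D i * x i ^ ((j : ℕ) + l) := by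
          rw [Finset.sum_comm]
          exact Finset.sum_congr rfl fun l _ => by rw [Finset.mul_sum]
      _ = 0 := h0
  have hroot : ∀ i, p.eval (x i) = 0 := by
    intro i
    have h := congrFun hv i
    simp only [Pi.zero_apply, mul_eq_zero] at h
    exact h.resolve_left (hD i)
  -- the multiset of nodes is ≤ roots of p
  have hnodup : (Finset.univ.val.map x).Nodup := Finset.univ.nodup.map hx
  have hle : (Finset.univ.val.map x) ≤ p.roots := by
    refine Multiset.le_iff_count.mpr fun b => ?_
    by_cases hb : b ∈ Finset.univ.val.map x
    · rw [Multiset.count_eq_one_of_mem hnodup hb]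
      obtain ⟨i, _, rfl⟩ := Multiset.mem_map.mp hb
      rw [Polynomial.count_roots]
      exact (Polynomial.rootMultiplicity_pos hpne).mpr (hroot i)
    · rw [Multiset.count_eq_zero_of_notMem hb]; exact Nat.zero_le _
  have hcard : Multiset.card (Finset.univ.val.map x) = N := by simp
  have hNM : N ≤ M := by
    have h1 := Multiset.card_le_card hle
    have h2 := p.card_roots'
    omega
  have hMN : M = N := le_antisymm hM hNM
  refine ⟨hMN, ?_⟩
  have hq : (∏ i, (X - C (x i))) ∣ p := by
    have h := (Multiset.prod_X_sub_C_dvd_iff_le_roots hpne (Finset.univ.val.map x)).mpr hle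
    rwa [Multiset.map_map, ← Finset.prod_eq_multiset_prod] at h
  have hqmonic : (∏ i, (X - C (x i))).Monic :=
    monic_prod_of_monic _ _ fun i _ => monic_X_sub_C _
  have hqdeg : (∏ i, (X - C (x i))).natDegree = N := by
    rw [Polynomial.natDegree_prod _ _ (fun i _ => X_sub_C_ne_zero _)]
    simp
  exact Polynomial.eq_of_monic_of_dvd_of_natDegree_le hqmonic hpmonic hq
    (by rw [hdeg, hMN, hqdeg])
end
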